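/- For the prior distribution on full binary subtrees T of a perfect binary tree T_max defined by p(T) = (∏_{s ∈ I_T} g_s)(∏_{s' ∈ L_T} (1 - g_{s'})), where I_T and L_T are the inner and leaf nodes of T, g_s ∈ [0,1] for each node s, and g_s = 0 for every leaf node s of T_max, the probabilities sum to 1: Σ_{T ∈ 𝒯} p(T) = 1, where 𝒯 is the set of all full subtrees of T_max rooted at the root of T_max. -/
import Mathlib


/-- A full binary tree: every inner node has exactly two children. -/
inductive FT : Type
  | leaf : FT
  | node : FT → FT → FT
deriving DecidableEq

/-- The set of all full subtrees (rooted at the root) of the perfect binary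
tree of depth `D`, encoded as full binary trees of depth at most `D`. -/
def treesUpTo : ℕ → Finset FT
  | 0 => {FT.leaf}
  | D + 1 =>
      insert FT.leaf
        (((treesUpTo D) ×ˢ (treesUpTo D)).image fun p => FT.node p.1 p.2)

/-- The prior probability of a full subtree, where the node at address `s`
(a list of left/right choices from the root) has edge-spreading probability
`g s`: inner nodes contribute `g s`, leaf nodes contribute `1 - g s`. -/
def treePrior (g : List Bool → ℝ) : FT → List Bool → ℝ
  | FT.leaf, s => 1 - g s
  | FT.node l r, s =>
      g s * treePrior g l (s ++ [false]) * treePrior g r (s ++ [true])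

lemma treePrior_sum_aux (g : List Bool → ℝ) :
    ∀ D (s : List Bool), (∀ t : List Bool, t.length = s.length + D → g t = 0) →
      ∑ T ∈ treesUpTo D, treePrior g T s = 1 := by
  intro D
  induction D with
  | zero =>
    intro s h
    simp [treesUpTo, treePrior, h s (by simp)]
  | succ D ih =>
    intro s h
    have hnot : FT.leaf ∉ (((treesUpTo D) ×ˢ (treesUpTo D)).image
        fun p => FT.node p.1 p.2) := by simp
    rw [treesUpTo, Finset.sum_insert hnot, Finset.sum_image (by
      intro a _ b _ hab
      simpa [Prod.ext_iff, FT.node.injEq] using hab)]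
    rw [Finset.sum_product]
    simp only [treePrior]
    have hl : ∑ l ∈ treesUpTo D, treePrior g l (s ++ [false]) = 1 := by
      apply ih
      intro t ht
      exact h t (by simp at ht ⊢; omega)
    have hr : ∑ r ∈ treesUpTo D, treePrior g r (s ++ [true]) = 1 := by
      apply ih
      intro t ht
      exact h t (by simp at ht ⊢; omega)
    have step : ∑ l ∈ treesUpTo D, ∑ r ∈ treesUpTo D,
          g s * treePrior g l (s ++ [false]) * treePrior g r (s ++ [true]) = g s := by
      have : ∀ l ∈ treesUpTo D, ∑ r ∈ treesUpTo D,
          g s * treePrior g l (s ++ [false]) * treePrior g r (s ++ [true])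
          = g s * treePrior g l (s ++ [false]) := by
        intro l _
        rw [← Finset.mul_sum, hr, mul_one]
      rw [Finset.sum_congr rfl this, ← Finset.mul_sum, hl, mul_one]
    rw [step]; ring

/-- The tree prior `p(T) = ∏_{s ∈ I_T} g_s ∏_{s' ∈ L_T} (1 - g_{s'})` sums to
one over all full subtrees of the perfect binary tree of depth `D_max`,
provided `g_s ∈ [0,1]` and `g_s = 0` for the leaves of `T_max`. -/
theorem treePrior_sums_to_one (Dmax : ℕ) (g : List Bool → ℝ)
    (hg : ∀ s, 0 ≤ g s ∧ g s ≤ 1)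
    (hleaf : ∀ s : List Bool, s.length = Dmax → g s = 0) :
    ∑ T ∈ treesUpTo Dmax, treePrior g T [] = 1 := by
  exact treePrior_sum_aux g Dmax [] (fun t ht => hleaf t (by simpa using ht))
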